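/- arXiv:2303.10592 — 3 statements merged into one kernel-verified Lean document; each statement's English description precedes it below -/
import Mathlib

section
/- For the graded-mesh L1 coefficients, the leading coefficients decrease with the time level: a_1^{(1,α)} > a_1^{(2,α)} > ... > a_1^{(M,α)} ≥ T^{-α}. -/
open Real

private lemma strictAntiOn_g {p h : ℝ} (hp0 : 0 < p) (hp1 : p < 1) (hh : 0 < h) :
    StrictAntiOn (fun x : ℝ => x ^ p - (x - h) ^ p) (Set.Ici h) := by
  have hcont : ContinuousOn (fun x : ℝ => x ^ p - (x - h) ^ p) (Set.Ici h) := by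
    apply ContinuousOn.sub
    · exact fun x _ => (Real.continuousAt_rpow_const x p (Or.inr hp0.le)).continuousWithinAt
    · exact fun x _ => (ContinuousAt.rpow_const (continuousAt_id.sub continuousAt_const)
        (Or.inr hp0.le)).continuousWithinAt
  have hint : interior (Set.Ici h) = Set.Ioi h := interior_Ici
  apply strictAntiOn_of_deriv_neg (convex_Ici h) hcont
  intro x hx
  rw [hint] at hx
  have hx' : h < x := hx
  have hx0 : 0 < x := hh.trans hx'
  have hxh : 0 < x - h := by linarith
  have d1 : HasDerivAt (fun x : ℝ => x ^ p) (p * x ^ (p - 1)) x :=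
    Real.hasDerivAt_rpow_const (Or.inl hx0.ne')
  have d2 : HasDerivAt (fun x : ℝ => (x - h) ^ p) (p * (x - h) ^ (p - 1)) x := by
    have := (Real.hasDerivAt_rpow_const (p := p) (Or.inl hxh.ne')).comp x
      ((hasDerivAt_id x).sub_const h)
    simpa [Function.comp_def] using this
  have : HasDerivAt (fun x : ℝ => x ^ p - (x - h) ^ p)
      (p * x ^ (p - 1) - p * (x - h) ^ (p - 1)) x := d1.sub d2
  rw [this.deriv]
  have : x ^ (p - 1) < (x - h) ^ (p - 1) :=
    Real.rpow_lt_rpow_of_neg hxh (by linarith) (by linarith)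
  nlinarith

/-- The leading graded-mesh L1 coefficients decrease with the time level:
`a_1^{(1,α)} > a_1^{(2,α)} > ⋯ > a_1^{(M,α)} ≥ T^{-α}`. -/
theorem graded_L1_first_coeff_decreasing
    (α T γ : ℝ) (M : ℕ) (hα0 : 0 < α) (hα1 : α < 1) (hT : 0 < T) (hγ : 1 ≤ γ)
    (hM : 1 ≤ M)
    (τ : ℕ → ℝ) (hτ : ∀ k, τ k = T * ((k : ℝ) / (M : ℝ)) ^ γ)
    (a : ℕ → ℕ → ℝ)
    (ha : ∀ n k, a n k =
      ((τ n - τ (k - 1)) ^ (1 - α) - (τ n - τ k) ^ (1 - α)) /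
        ((1 - α) * (τ k - τ (k - 1)))) :
    (∀ n, 1 ≤ n → n < M → a (n + 1) 1 < a n 1) ∧ T ^ (-α) ≤ a M 1 := by
  set p := 1 - α with hp
  have hp0 : 0 < p := by linarith
  have hp1 : p < 1 := by linarith
  have hM0 : (0 : ℝ) < (M : ℝ) := by exact_mod_cast hM
  have hγ0 : 0 < γ := by linarith
  have hτ0 : τ 0 = 0 := by
    rw [hτ]; simp [Real.zero_rpow hγ0.ne']
  have hτM : τ M = T := by
    rw [hτ, div_self hM0.ne', Real.one_rpow, mul_one]
  have hτpos : ∀ n : ℕ, 1 ≤ n → 0 < τ n := by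
    intro n hn
    rw [hτ]
    have : (0 : ℝ) < (n : ℝ) / (M : ℝ) := by positivity
    positivity
  have hτmono : ∀ m n : ℕ, m < n → τ m < τ n := by
    intro m n hmn
    rw [hτ, hτ]
    have hmn' : (m : ℝ) / M < (n : ℝ) / M := by
      apply div_lt_div_of_pos_right (by exact_mod_cast hmn) hM0
    have h0 : (0:ℝ) ≤ (m : ℝ) / M := by positivity
    exact mul_lt_mul_of_pos_left (Real.rpow_lt_rpow h0 hmn' hγ0) hT
  set h := τ 1 with hh
  have hhpos : 0 < h := hτpos 1 le_rfl
  have ha1 : ∀ n : ℕ, a n 1 = ((τ n) ^ p - (τ n - h) ^ p) / (p * h) := by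
    intro n
    rw [ha]
    norm_num [hτ0, hp]
    rfl
  have hτge : ∀ n : ℕ, 1 ≤ n → h ≤ τ n := by
    intro n hn
    rcases eq_or_lt_of_le hn with h1 | h1
    · rw [← h1]
    · exact (hτmono 1 n h1).le
  constructor
  · intro n hn hnM
    rw [ha1, ha1]
    apply div_lt_div_of_pos_right ?_ (by positivity)
    exact strictAntiOn_g hp0 hp1 hhpos (hτge n hn) (hτge (n+1) (by omega))
      (hτmono n (n+1) (by omega))
  · rw [ha1, hτM]
    have hhT : h ≤ T := by rw [← hτM]; exact hτge M hM
    have key : p * h * T ^ (p - 1) ≤ T ^ p - (T - h) ^ p := by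
      obtain ⟨c, hc, hceq⟩ := exists_hasDerivAt_eq_slope (fun t : ℝ => t ^ p)
        (fun t : ℝ => p * t ^ (p - 1)) (show T - h < T by linarith)
        (fun x _ => (ContinuousAt.rpow_const continuousAt_id (Or.inr hp0.le)).continuousWithinAt)
        (fun x hx => Real.hasDerivAt_rpow_const (Or.inl (ne_of_gt (by
          have := hx.1; linarith))))
      have hc0 : 0 < c := lt_of_le_of_lt (by linarith) hc.1
      have hcle : p * T ^ (p - 1) ≤ p * c ^ (p - 1) :=
        mul_le_mul_of_nonneg_left
          (Real.rpow_le_rpow_of_nonpos hc0 hc.2.le (by linarith)) hp0.le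
      have hslope : (T ^ p - (T - h) ^ p) / (T - (T - h)) = p * c ^ (p - 1) := hceq.symm
      rw [show T - (T - h) = h by ring] at hslope
      have h2 : T ^ p - (T - h) ^ p = h * (p * c ^ (p - 1)) := by
        field_simp at hslope
        linarith [hslope]
      nlinarith [hcle, h2]
    rw [show (-α : ℝ) = p - 1 by rw [hp]; ring, le_div_iff₀ (by positivity)]
    nlinarith [key]
end

section
/- Suppose nonnegative real numbers E_0, E_1, ..., E_M, nonnegative numbers g_1,...,g_M, and for each n coefficients satisfying 0 < a_1^{(n)} < a_2^{(n)} < ... < a_n^{(n)}, such that a_n^{(n)} E_n ≤ Σ_{k=1}^{n-1} (a_{k+1}^{(n)} − a_k^{(n)}) E_k + a_1^{(n)} (E_0 + g_n / a_1^{(n)}) for all 1 ≤ n ≤ M. Then E_n ≤ E_0 + max_{1≤m≤n} g_m / a_1^{(m)} for all 1 ≤ n ≤ M. -/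
open Finset

private lemma chain_le (b : ℕ → ℝ) (n : ℕ)
    (h : ∀ k, 1 ≤ k → k < n → b k < b (k + 1)) :
    ∀ j, 1 ≤ j → j ≤ n → b 1 ≤ b j := by
  intro j hj1 hjn
  induction j with
  | zero => omega
  | succ j ihj =>
    rcases Nat.eq_or_lt_of_le hj1 with h1 | h1
    · simp [← h1]
    · have hj1' : 1 ≤ j := by omega
      have := ihj hj1' (by omega)
      have := h j hj1' (by omega)
      linarith

private lemma telescope (b : ℕ → ℝ) (n : ℕ) (hn : 1 ≤ n) :
    ∑ k ∈ Icc 1 (n - 1), (b (k + 1) - b k) = b n - b 1 := by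
  induction n with
  | zero => omega
  | succ m ihm =>
    rcases Nat.eq_or_lt_of_le hn with h1 | h1
    · simp [← h1]
    · have hm1 : 1 ≤ m := by omega
      have hmm : m + 1 - 1 = (m - 1) + 1 := by omega
      rw [hmm, Finset.sum_Icc_succ_top (by omega : 1 ≤ m - 1 + 1), ihm hm1]
      have : m - 1 + 1 = m := by omega
      rw [this]
      ring

/-- Discrete stability inequality: if
`a_n^{(n)} E_n ≤ Σ_{k=1}^{n-1}(a_{k+1}^{(n)} − a_k^{(n)}) E_k + a_1^{(n)}(E_0 + g_n/a_1^{(n)})`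
with positive strictly increasing coefficients, then
`E_n ≤ E_0 + max_{1≤m≤n} g_m / a_1^{(m)}`. -/
theorem discrete_L1_stability
    (M : ℕ) (hM : 1 ≤ M) (E g : ℕ → ℝ) (a : ℕ → ℕ → ℝ)
    (hE : ∀ n, n ≤ M → 0 ≤ E n) (hg : ∀ n, 1 ≤ n → n ≤ M → 0 ≤ g n)
    (hapos : ∀ n, 1 ≤ n → n ≤ M → 0 < a n 1)
    (hainc : ∀ n, 1 ≤ n → n ≤ M → ∀ k, 1 ≤ k → k < n → a n k < a n (k + 1))
    (hrec : ∀ n, 1 ≤ n → n ≤ M →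
      a n n * E n ≤ (∑ k ∈ Icc 1 (n - 1), (a n (k + 1) - a n k) * E k) +
        a n 1 * (E 0 + g n / a n 1)) :
    ∀ n, (hn : 1 ≤ n) → n ≤ M →
      E n ≤ E 0 + (Icc 1 n).sup' (Finset.nonempty_Icc.mpr hn)
        (fun m => g m / a m 1) := by
  intro n
  induction n using Nat.strong_induction_on with
  | _ n ih =>
    intro hn hnM
    set S : ℝ := (Icc 1 n).sup' (Finset.nonempty_Icc.mpr hn) (fun m => g m / a m 1) with hS
    -- S bounds each term
    have hSub : ∀ m, 1 ≤ m → m ≤ n → g m / a m 1 ≤ S := by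
      intro m h1 h2
      exact Finset.le_sup' (fun m => g m / a m 1) (Finset.mem_Icc.mpr ⟨h1, h2⟩)
    -- each E k for 1 ≤ k ≤ n-1 bounded
    have hEk : ∀ k, 1 ≤ k → k ≤ n - 1 → E k ≤ E 0 + S := by
      intro k hk1 hk2
      have hkn : k < n := by omega
      have := ih k hkn hk1 (by omega)
      refine this.trans (add_le_add_right (Finset.sup'_le _ _ ?_) _)
      intro m hm
      rw [Finset.mem_Icc] at hm
      exact hSub m hm.1 (by omega)
    have ha1 : 0 < a n 1 := hapos n hn hnM
    have hann : 0 < a n n := lt_of_lt_of_le ha1 (chain_le (a n) n (hainc n hn hnM) n hn le_rfl)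
    have hdiff : ∀ k ∈ Icc 1 (n - 1), 0 ≤ a n (k + 1) - a n k := by
      intro k hk
      rw [Finset.mem_Icc] at hk
      have := hainc n hn hnM k hk.1 (by omega)
      linarith
    have hgnS : g n / a n 1 ≤ S := hSub n hn le_rfl
    have hS0 : 0 ≤ S := le_trans (div_nonneg (hg n hn hnM) ha1.le) hgnS
    have key : a n n * E n ≤ a n n * (E 0 + S) := by
      have h1 := hrec n hn hnM
      have h2 : (∑ k ∈ Icc 1 (n - 1), (a n (k + 1) - a n k) * E k) ≤
          (∑ k ∈ Icc 1 (n - 1), (a n (k + 1) - a n k) * (E 0 + S)) := by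
        apply Finset.sum_le_sum
        intro k hk
        rw [Finset.mem_Icc] at hk
        exact mul_le_mul_of_nonneg_left (hEk k hk.1 hk.2) (hdiff k (Finset.mem_Icc.mpr hk))
      have h3 : (∑ k ∈ Icc 1 (n - 1), (a n (k + 1) - a n k) * (E 0 + S)) =
          (a n n - a n 1) * (E 0 + S) := by
        rw [← Finset.sum_mul, telescope (a n) n hn]
      have h4 : a n 1 * (E 0 + g n / a n 1) ≤ a n 1 * (E 0 + S) := by
        apply mul_le_mul_of_nonneg_left _ ha1.le
        linarith
      calc a n n * E n ≤ _ := h1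
        _ ≤ (a n n - a n 1) * (E 0 + S) + a n 1 * (E 0 + S) := by
            rw [← h3]; exact add_le_add h2 h4
        _ = a n n * (E 0 + S) := by ring
    exact le_of_mul_le_mul_left key hann
end

section
/- Suppose nonnegative reals E_n satisfy the fast-scheme stability recursion b_n^{(n)} E_n ≤ Σ_{k=1}^{n-1}(b_{k+1}^{(n)} − b_k^{(n)}) E_k + b_1^{(n)}(E_0 + g_n/b_1^{(n)}) where 0 < b_1^{(n)} < ... < b_{n-1}^{(n)} ≤ b_n^{(n)}. Then E_n ≤ E_0 + max_{1≤m≤n} g_m/b_1^{(m)}. -/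
open Finset

lemma telescope_Icc (f : ℕ → ℝ) (m : ℕ) :
    (∑ k ∈ Icc 1 m, (f (k + 1) - f k)) = f (m + 1) - f 1 := by
  induction m with
  | zero => simp
  | succ m ih => rw [Finset.sum_Icc_succ_top (by omega), ih]; ring

/-- Fast-scheme stability: if `b_n^{(n)} E_n ≤ Σ_{k=1}^{n-1}(b_{k+1}^{(n)} −
b_k^{(n)}) E_k + b_1^{(n)}(E_0 + g_n/b_1^{(n)})` with
`0 < b_1^{(n)} < ⋯ < b_{n-1}^{(n)} ≤ b_n^{(n)}`, then
`E_n ≤ E_0 + max_{1≤m≤n} g_m/b_1^{(m)}`. -/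
theorem fast_discrete_stability
    (M : ℕ) (hM : 1 ≤ M) (E g : ℕ → ℝ) (b : ℕ → ℕ → ℝ)
    (hE : ∀ n, n ≤ M → 0 ≤ E n) (hg : ∀ n, 1 ≤ n → n ≤ M → 0 ≤ g n)
    (hbpos : ∀ n, 1 ≤ n → n ≤ M → 0 < b n 1)
    (hbinc : ∀ n, 1 ≤ n → n ≤ M → ∀ k, 1 ≤ k → k + 1 ≤ n - 1 →
      b n k < b n (k + 1))
    (hbdiag : ∀ n, 2 ≤ n → n ≤ M → b n (n - 1) ≤ b n n)
    (hrec : ∀ n, 1 ≤ n → n ≤ M →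
      b n n * E n ≤ (∑ k ∈ Icc 1 (n - 1), (b n (k + 1) - b n k) * E k) +
        b n 1 * (E 0 + g n / b n 1)) :
    ∀ n, (hn : 1 ≤ n) → n ≤ M →
      E n ≤ E 0 + (Icc 1 n).sup' (Finset.nonempty_Icc.mpr hn)
        (fun m => g m / b m 1) := by
  intro n
  induction n using Nat.strong_induction_on with
  | _ n IH =>
  intro hn hnM
  set S : ℝ := (Icc 1 n).sup' (Finset.nonempty_Icc.mpr hn) (fun m => g m / b m 1) with hS
  -- chain: b n 1 ≤ b n j for 1 ≤ j ≤ n - 1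
  have hchain : ∀ j, 1 ≤ j → j ≤ n - 1 → b n 1 ≤ b n j := by
    intro j
    induction j with
    | zero => omega
    | succ j ihj =>
      intro h1 h2
      rcases Nat.eq_zero_or_pos j with hj0 | hj1
      · subst hj0; exact le_refl _
      · exact le_trans (ihj hj1 (by omega)) (le_of_lt (hbinc n hn hnM j hj1 h2))
  have hb1n : b n 1 ≤ b n n := by
    rcases Nat.lt_or_ge n 2 with h2 | h2
    · have : n = 1 := by omega
      subst this; exact le_refl _
    · exact le_trans (hchain (n - 1) (by omega) (le_refl _)) (hbdiag n h2 hnM)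
  have hbnn : 0 < b n n := lt_of_lt_of_le (hbpos n hn hnM) hb1n
  -- g n / b n 1 ≤ S
  have hgS : g n / b n 1 ≤ S := by
    exact Finset.le_sup' (fun m => g m / b m 1) (Finset.mem_Icc.mpr ⟨hn, le_refl n⟩)
  -- each E k ≤ E 0 + S for k ∈ Icc 1 (n-1)
  have hEk : ∀ k ∈ Icc 1 (n - 1), E k ≤ E 0 + S := by
    intro k hk
    rw [Finset.mem_Icc] at hk
    have hk1 : 1 ≤ k := hk.1
    have hkn : k < n := by omega
    have h1 := IH k hkn hk1 (by omega)
    refine le_trans h1 ?_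
    have : (Icc 1 k).sup' (Finset.nonempty_Icc.mpr hk1) (fun m => g m / b m 1) ≤ S := by
      apply Finset.sup'_le
      intro m hm
      rw [Finset.mem_Icc] at hm
      exact Finset.le_sup' (fun m => g m / b m 1) (Finset.mem_Icc.mpr ⟨hm.1, by omega⟩)
    linarith
  -- coefficients nonneg
  have hcoef : ∀ k ∈ Icc 1 (n - 1), 0 ≤ b n (k + 1) - b n k := by
    intro k hk
    rw [Finset.mem_Icc] at hk
    rcases Nat.lt_or_ge (k + 1) n with hlt | hge
    · exact sub_nonneg.mpr (le_of_lt (hbinc n hn hnM k hk.1 (by omega)))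
    · have hkeq : k = n - 1 := by omega
      have : b n k ≤ b n n := hkeq ▸ hbdiag n (by omega) hnM
      have hk1n : k + 1 = n := by omega
      rw [hk1n]
      linarith
  -- telescoping sum
  have htel : (∑ k ∈ Icc 1 (n - 1), (b n (k + 1) - b n k)) = b n n - b n 1 := by
    rw [telescope_Icc (fun k => b n k) (n - 1), Nat.sub_add_cancel hn]
  -- main estimate
  have hmain : b n n * E n ≤ b n n * (E 0 + S) := by
    have h1 := hrec n hn hnM
    have h2 : (∑ k ∈ Icc 1 (n - 1), (b n (k + 1) - b n k) * E k)
        ≤ (∑ k ∈ Icc 1 (n - 1), (b n (k + 1) - b n k) * (E 0 + S)) := by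
      apply Finset.sum_le_sum
      intro k hk
      exact mul_le_mul_of_nonneg_left (hEk k hk) (hcoef k hk)
    have h3 : (∑ k ∈ Icc 1 (n - 1), (b n (k + 1) - b n k) * (E 0 + S))
        = (b n n - b n 1) * (E 0 + S) := by
      rw [← Finset.sum_mul, htel]
    have h4 : b n 1 * (E 0 + g n / b n 1) ≤ b n 1 * (E 0 + S) :=
      mul_le_mul_of_nonneg_left (by linarith) (le_of_lt (hbpos n hn hnM))
    calc b n n * E n ≤ (∑ k ∈ Icc 1 (n - 1), (b n (k + 1) - b n k) * E k) +
          b n 1 * (E 0 + g n / b n 1) := h1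
      _ ≤ (b n n - b n 1) * (E 0 + S) + b n 1 * (E 0 + S) := by
          rw [← h3]; exact add_le_add h2 h4
      _ = b n n * (E 0 + S) := by ring
  exact le_of_mul_le_mul_left hmain hbnn
end
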